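/- In a CAT(0) metric space, the sum of the (Alexandrov) angles of any geodesic triangle with distinct vertices is at most π. -/

import Mathlib

/-- A (unit-speed) geodesic segment from `x` to `y`, defined on `[0, dist x y]`. -/
def IsGeodesic {X : Type*} [MetricSpace X] (x y : X) (γ : ℝ → X) : Prop :=
  γ 0 = x ∧ γ (dist x y) = y ∧
    ∀ s ∈ Set.Icc (0:ℝ) (dist x y), ∀ t ∈ Set.Icc (0:ℝ) (dist x y),
      dist (γ s) (γ t) = |s - t|

/-- A geodesic metric space: every pair of points is joined by a geodesic. -/
def GeodesicSpace (X : Type*) [MetricSpace X] : Prop :=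
  ∀ x y : X, ∃ γ : ℝ → X, IsGeodesic x y γ

/-- The CAT(0) comparison axiom: for every geodesic triangle and every comparison
triangle in the Euclidean plane with the same side lengths, distances from the third
vertex to points of a side are bounded by the corresponding Euclidean distances. -/
def CAT0 (X : Type*) [MetricSpace X] : Prop :=
  GeodesicSpace X ∧
    ∀ (x₁ x₂ x₃ : X) (γ : ℝ → X), IsGeodesic x₁ x₂ γ →
      ∀ x₁' x₂' x₃' : EuclideanSpace ℝ (Fin 2),
        dist x₁' x₂' = dist x₁ x₂ → dist x₁' x₃' = dist x₁ x₃ →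
        dist x₂' x₃' = dist x₂ x₃ →
        ∀ t ∈ Set.Icc (0:ℝ) (dist x₁ x₂),
          dist x₃ (γ t) ≤ dist x₃' (x₁' + (t / dist x₁ x₂) • (x₂' - x₁'))

/-- The Euclidean comparison angle at `p` of the triple `(p, a, b)`, given by the
law of cosines. -/
noncomputable def compAngle {X : Type*} [MetricSpace X] (p a b : X) : ℝ :=
  Real.arccos ((dist p a ^ 2 + dist p b ^ 2 - dist a b ^ 2) /
    (2 * dist p a * dist p b))

/-- The Alexandrov (upper) angle at `p` between two geodesics `γ₁, γ₂` issuing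
from `p`: the limsup of comparison angles of small triangles at `p`. -/
noncomputable def alexAngle {X : Type*} [MetricSpace X] (p : X) (γ₁ γ₂ : ℝ → X) : ℝ :=
  Filter.limsup (fun t => compAngle p (γ₁ t) (γ₂ t)) (nhdsWithin (0:ℝ) (Set.Ioi 0))

section Helpers
open Real EuclideanGeometry


noncomputable def E2 (a b : ℝ) : EuclideanSpace ℝ (Fin 2) :=
  (WithLp.equiv 2 (∀ _ : Fin 2, ℝ)).symm ![a, b]

lemma dist_E2 (a b c d : ℝ) :
    dist (E2 a b) (E2 c d) = Real.sqrt ((a - c)^2 + (b - d)^2) := by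
  rw [EuclideanSpace.dist_eq]
  simp [E2, Fin.sum_univ_two, Real.dist_eq, sq_abs]

/-- Existence of a comparison triangle in the Euclidean plane. -/
lemma exists_comparison {X : Type*} [MetricSpace X] (x y z : X) (hxy : x ≠ y) :
    ∃ p q r : EuclideanSpace ℝ (Fin 2),
      dist p q = dist x y ∧ dist p r = dist x z ∧ dist q r = dist y z := by
  set d := dist x y with hd
  set e := dist x z with he
  set f := dist y z with hf
  have hd0 : 0 < d := dist_pos.2 hxy
  have he0 : 0 ≤ e := dist_nonneg
  have hf0 : 0 ≤ f := dist_nonneg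
  have t1 : f ≤ d + e := by rw [hd, he, hf, dist_comm x y]; exact dist_triangle y x z
  have t2 : e ≤ d + f := dist_triangle x y z
  have t3 : d ≤ e + f := by rw [hd, he, hf, dist_comm y z]; exact dist_triangle x z y
  set cx : ℝ := (d^2 + e^2 - f^2) / (2*d) with hcx
  have hkey : cx^2 ≤ e^2 := by
    rw [hcx, div_pow, div_le_iff₀ (by positivity)]
    nlinarith [sq_nonneg ((d+e)^2 - f^2), mul_nonneg (sub_nonneg.2 t1) (sub_nonneg.2 t3),
      mul_nonneg (mul_nonneg (sub_nonneg.2 t1) (sub_nonneg.2 t3)) (sub_nonneg.2 t2)]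
  set cy : ℝ := Real.sqrt (e^2 - cx^2) with hcy
  have hcy2 : cy^2 = e^2 - cx^2 := Real.sq_sqrt (by linarith)
  refine ⟨E2 0 0, E2 d 0, E2 cx cy, ?_, ?_, ?_⟩
  · rw [dist_E2]
    rw [show (0 - d)^2 + (0-0:ℝ)^2 = d^2 by ring, Real.sqrt_sq hd0.le]
  · rw [dist_E2]
    rw [show (0 - cx)^2 + (0 - cy)^2 = cx^2 + cy^2 by ring, hcy2,
      show cx^2 + (e^2 - cx^2) = e^2 by ring, Real.sqrt_sq he0]
  · rw [dist_E2]
    have : (d - cx)^2 + (0 - cy)^2 = f^2 := by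
      rw [show (0 - cy)^2 = cy^2 by ring, hcy2, hcx]
      field_simp
      ring
    rw [this, Real.sqrt_sq hf0]

lemma norm_seg (u v : EuclideanSpace ℝ (Fin 2)) (lam : ℝ) :
    ‖u - lam • v‖ ^ 2 = ‖u‖^2 - lam * (‖u‖^2 + ‖v‖^2 - ‖u - v‖^2) + lam^2 * ‖v‖^2 := by
  have h := norm_sub_sq_real u v
  have h2 := norm_sub_sq_real u (lam • v)
  rw [real_inner_smul_right] at h2
  have h3 : ‖lam • v‖^2 = lam^2 * ‖v‖^2 := by
    rw [norm_smul, mul_pow, Real.norm_eq_abs, sq_abs]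
  rw [h3] at h2
  have hi : (inner ℝ u v : ℝ) = (‖u‖^2 + ‖v‖^2 - ‖u - v‖^2)/2 := by linarith
  rw [hi] at h2
  linear_combination h2

lemma dist_seg (a b c : EuclideanSpace ℝ (Fin 2)) (lam : ℝ) :
    dist c (a + lam • (b - a)) ^ 2 =
      dist a c ^2 - lam * (dist a c ^2 + dist a b ^2 - dist b c ^2) + lam^2 * dist a b ^2 := by
  have h1 : c - (a + lam • (b - a)) = (c - a) - lam • (b - a) := by
    rw [sub_add_eq_sub_sub]
  rw [dist_eq_norm, h1, norm_seg]
  rw [show (c - a) - (b - a) = c - b by abel]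
  rw [dist_eq_norm' a c, dist_eq_norm' a b, dist_eq_norm' b c]

lemma arccos_antitone {x y : ℝ} (h : x ≤ y) : Real.arccos y ≤ Real.arccos x := by
  unfold Real.arccos
  have := Real.monotone_arcsin h
  linarith

lemma compAngle_eq_angle (p q r : EuclideanSpace ℝ (Fin 2)) (hq : p ≠ q) (hr : p ≠ r) :
    compAngle p q r = EuclideanGeometry.angle q p r := by
  have law := EuclideanGeometry.law_cos q p r
  rw [dist_comm q p, dist_comm r p] at law
  have h1 : (0:ℝ) < dist p q := dist_pos.2 hq
  have h2 : (0:ℝ) < dist p r := dist_pos.2 hr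
  have harg : (dist p q ^ 2 + dist p r ^ 2 - dist q r ^ 2) / (2 * dist p q * dist p r)
      = Real.cos (EuclideanGeometry.angle q p r) := by
    rw [div_eq_iff (by positivity)]
    nlinarith [law]
  rw [compAngle, harg, Real.arccos_cos (EuclideanGeometry.angle_nonneg _ _ _)
    (EuclideanGeometry.angle_le_pi _ _ _)]

lemma compAngle_sum {X : Type*} [MetricSpace X] (x₁ x₂ x₃ : X)
    (h₁₂ : x₁ ≠ x₂) (h₂₃ : x₂ ≠ x₃) (h₁₃ : x₁ ≠ x₃) :
    compAngle x₁ x₂ x₃ + compAngle x₂ x₃ x₁ + compAngle x₃ x₁ x₂ = Real.pi := by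
  obtain ⟨p, q, r, hpq, hpr, hqr⟩ := exists_comparison x₁ x₂ x₃ h₁₂
  have hpq' : p ≠ q := by rw [← dist_pos, hpq, dist_pos]; exact h₁₂
  have hpr' : p ≠ r := by rw [← dist_pos, hpr, dist_pos]; exact h₁₃
  have hqr' : q ≠ r := by rw [← dist_pos, hqr, dist_pos]; exact h₂₃
  have e1 : compAngle x₁ x₂ x₃ = compAngle p q r := by
    rw [compAngle, compAngle, hpq, hpr, hqr]
  have e2 : compAngle x₂ x₃ x₁ = compAngle q r p := by
    rw [compAngle, compAngle, hqr, dist_comm q p, hpq, dist_comm r p, hpr,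
      dist_comm x₂ x₁, dist_comm x₃ x₁]
  have e3 : compAngle x₃ x₁ x₂ = compAngle r p q := by
    rw [compAngle, compAngle, dist_comm r p, hpr, dist_comm r q, hqr, hpq,
      dist_comm x₃ x₁, dist_comm x₃ x₂]
  rw [e1, e2, e3, compAngle_eq_angle p q r hpq' hpr',
    compAngle_eq_angle q r p hqr' (Ne.symm hpq'), compAngle_eq_angle r p q (Ne.symm hpr') (Ne.symm hqr')]
  have h := EuclideanGeometry.angle_add_angle_add_angle_eq_pi (p₁ := r) (p₂ := p) (p₃ := q)
    hpr'
  rw [EuclideanGeometry.angle_comm q p r, EuclideanGeometry.angle_comm r q p,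
    EuclideanGeometry.angle_comm p r q]
  linarith [h]

set_option maxHeartbeats 2000000 in
lemma alexAngle_le_compAngle {X : Type*} [MetricSpace X] (hX : CAT0 X)
    (p q r : X) (hpq : p ≠ q) (hrp : r ≠ p)
    (γ₁ γ₂ : ℝ → X) (h1 : IsGeodesic p q γ₁) (h2 : IsGeodesic r p γ₂) :
    alexAngle p γ₁ (fun t => γ₂ (dist r p - t)) ≤ compAngle p q r := by
  obtain ⟨ha0, had, haiso⟩ := h1
  obtain ⟨hc0, hce, hciso⟩ := h2
  set d := dist p q with hd
  set e := dist r p with he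
  set f := dist q r with hf
  have hd0 : 0 < d := dist_pos.2 hpq
  have he0 : 0 < e := dist_pos.2 hrp
  set E : ℝ := (d^2 + e^2 - f^2)/(2*d*e) with hE
  have hcomp : compAngle p q r = Real.arccos E := by
    rw [compAngle, dist_comm p r, ← he, ← hd, ← hf]
  rw [hcomp]
  simp only [alexAngle]
  apply Filter.limsup_le_of_le
    (Filter.isCoboundedUnder_le_of_le _ (fun i => Real.arccos_nonneg _))
  filter_upwards [Ioc_mem_nhdsGT_of_mem
    (Set.mem_Ico.mpr ⟨le_refl (0:ℝ), lt_min hd0 he0⟩)] with t ht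
  obtain ⟨ht0, htm⟩ := ht
  have htd : t ≤ d := le_trans htm (min_le_left _ _)
  have hte : t ≤ e := le_trans htm (min_le_right _ _)
  -- distances from p along the two sides
  have hu : dist p (γ₁ t) = t := by
    have h := haiso 0 ⟨le_refl 0, hd0.le⟩ t ⟨ht0.le, htd⟩
    rw [ha0] at h
    rw [h, zero_sub, abs_neg, abs_of_nonneg ht0.le]
  have hv : dist p (γ₂ (e - t)) = t := by
    have h := hciso e ⟨he0.le, le_refl e⟩ (e - t) ⟨by linarith, by linarith⟩
    rw [hce] at h
    rw [h, show e - (e - t) = t by ring, abs_of_nonneg ht0.le]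
  -- first CAT(0) comparison: distance from r to γ₁ t
  obtain ⟨p', q', r', hpq', hpr', hqr'⟩ := exists_comparison p q r hpq
  have hcat1 := hX.2 p q r γ₁ ⟨ha0, had, haiso⟩ p' q' r' hpq' hpr' hqr' t ⟨ht0.le, htd⟩
  set D := dist r (γ₁ t) with hD
  have hD0 : (0:ℝ) ≤ D := dist_nonneg
  have hDsq : D^2 ≤ e^2 + t^2 - 2*t*e*E := by
    have h := pow_le_pow_left₀ hD0 hcat1 2
    rw [dist_seg, hpr', hpq', hqr', dist_comm p r, ← he, ← hd, ← hf] at h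
    have hid : e^2 - t/d * (e^2 + d^2 - f^2) + (t/d)^2 * d^2 = e^2 + t^2 - 2*t*e*E := by
      rw [hE]; field_simp; ring
    linarith [h, hid]
  -- second CAT(0) comparison: distance between the two moving points
  obtain ⟨r'', p'', u'', h1'', h2'', h3''⟩ := exists_comparison r p (γ₁ t) hrp
  have hcat2 := hX.2 r p (γ₁ t) γ₂ ⟨hc0, hce, hciso⟩ r'' p'' u'' h1'' h2'' h3''
    (e - t) ⟨by linarith, by linarith⟩
  have hduv : dist (γ₁ t) (γ₂ (e - t))^2 ≤ 2*t^2*(1 - E) := by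
    have h := pow_le_pow_left₀ dist_nonneg hcat2 2
    rw [dist_seg, h1'', h2'', h3'', hu, ← he, ← hD] at h
    have hid : D^2 - (e-t)/e * (D^2 + e^2 - t^2) + ((e-t)/e)^2 * e^2
        = t/e * (D^2 - (e-t)^2) := by
      field_simp; ring
    have hb : t/e * (D^2 - (e-t)^2) ≤ t/e * (2*e*t*(1-E)) := by
      apply mul_le_mul_of_nonneg_left _ (by positivity)
      nlinarith [hDsq]
    have hc : t/e * (2*e*t*(1-E)) = 2*t^2*(1-E) := by field_simp
    linarith [h, hid, hb, hc]
  show Real.arccos ((dist p (γ₁ t) ^ 2 + dist p (γ₂ (e - t)) ^ 2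
      - dist (γ₁ t) (γ₂ (e - t)) ^ 2) / (2 * dist p (γ₁ t) * dist p (γ₂ (e - t))))
    ≤ Real.arccos E
  rw [hu, hv]
  apply arccos_antitone
  rw [le_div_iff₀ (by positivity)]
  nlinarith [hduv]

end Helpers

/-- In a CAT(0) metric space, the sum of the Alexandrov angles of any geodesic
triangle with distinct vertices is at most `π`. Here `a, b, c` are the sides of the
triangle, and the angle at each vertex is taken between the outgoing side and the
reversal of the incoming side. -/
theorem cat0_angle_sum_le_pi {X : Type*} [MetricSpace X] (hX : CAT0 X)
    (x₁ x₂ x₃ : X) (h₁₂ : x₁ ≠ x₂) (h₂₃ : x₂ ≠ x₃) (h₁₃ : x₁ ≠ x₃)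
    (a b c : ℝ → X)
    (ha : IsGeodesic x₁ x₂ a) (hb : IsGeodesic x₂ x₃ b) (hc : IsGeodesic x₃ x₁ c) :
    alexAngle x₁ a (fun t => c (dist x₃ x₁ - t)) +
      alexAngle x₂ b (fun t => a (dist x₁ x₂ - t)) +
      alexAngle x₃ c (fun t => b (dist x₂ x₃ - t)) ≤ Real.pi := by
  have k1 := alexAngle_le_compAngle hX x₁ x₂ x₃ h₁₂ (Ne.symm h₁₃) a c ha hc
  have k2 := alexAngle_le_compAngle hX x₂ x₃ x₁ h₂₃ h₁₂ b a hb ha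
  have k3 := alexAngle_le_compAngle hX x₃ x₁ x₂ (Ne.symm h₁₃) h₂₃ c b hc hb
  have hsum := compAngle_sum x₁ x₂ x₃ h₁₂ h₂₃ h₁₃
  linarith
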